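/- Let (t, e) be a counital fusion morphism on an object A of a braided monoidal category C, with induced multiplication m := t ≫ (e ⊗ 1_A) ≫ λ_A. Then e is multiplicative: m ≫ e = (e ⊗ e) ≫ λ_I as morphisms A ⊗ A ⟶ I (where λ_I : I ⊗ I ≅ I is the unitor). -/

import Mathlib

open CategoryTheory Category MonoidalCategory

universe v u

variable {C : Type u} [Category.{v} C] [MonoidalCategory C] [BraidedCategory C]

/-- The fusion equation for `t : A ⊗ A ⟶ A ⊗ A` in a braided monoidal category,
with all coherence isomorphisms made explicit (domain `A ⊗ (A ⊗ A)`). -/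
def FusionEq (A : C) (t : A ⊗ A ⟶ A ⊗ A) : Prop :=
  (A ◁ t) ≫ (α_ A A A).inv ≫ ((β_ A A).hom ▷ A) ≫ (α_ A A A).hom ≫ (A ◁ t) ≫
      (α_ A A A).inv ≫ ((β_ A A).inv ▷ A) ≫ (t ▷ A) ≫ (α_ A A A).hom =
    (α_ A A A).inv ≫ (t ▷ A) ≫ (α_ A A A).hom ≫ (A ◁ t)

/-- The counitality condition `t ≫ (1 ⊗ e) = 1 ⊗ e`. -/
def Counital (A : C) (t : A ⊗ A ⟶ A ⊗ A) (e : A ⟶ 𝟙_ C) : Prop :=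
  t ≫ (A ◁ e) = A ◁ e

/-- The multiplication induced by a counital fusion morphism:
`m := t ≫ (e ⊗ 1) ≫ λ_A`. -/
def mulOf (A : C) (t : A ⊗ A ⟶ A ⊗ A) (e : A ⟶ 𝟙_ C) : A ⊗ A ⟶ A :=
  t ≫ (e ▷ A) ≫ (λ_ A).hom


/-- For a counital fusion morphism `(t, e)` on `A` with induced multiplication `m`,
the counit is multiplicative: `m ≫ e = (e ⊗ e) ≫ λ_I`. -/
theorem counit_mul (A : C) (t : A ⊗ A ⟶ A ⊗ A) (e : A ⟶ 𝟙_ C)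
    (hfus : FusionEq A t) (hcou : Counital A t e) :
    mulOf A t e ≫ e = (e ⊗ₘ e) ≫ (λ_ (𝟙_ C)).hom := by
  simp only [mulOf, assoc]
  calc t ≫ (e ▷ A) ≫ (λ_ A).hom ≫ e
      = t ≫ (A ◁ e) ≫ (e ▷ 𝟙_ C) ≫ (λ_ (𝟙_ C)).hom := by
        rw [← leftUnitor_naturality, ← whisker_exchange_assoc]
    _ = (A ◁ e) ≫ (e ▷ 𝟙_ C) ≫ (λ_ (𝟙_ C)).hom := by rw [reassoc_of% hcou]
    _ = (e ⊗ₘ e) ≫ (λ_ (𝟙_ C)).hom := by simp [tensorHom_def']
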